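/- Let $f \in GL(2,\mathbb{Z})$ be an involution ($f^2 = I$, $f \neq \pm I$) with eigenvalues $1$ and $-1$, let $\mu : \mathbb{Z}^2 \to \mathbb{Z}$ be a surjective-onto-$m_L\mathbb{Z}$ linear functional with $\mu \circ f = \mu$, let $\eta_f$ be a primitive vector spanning $\mathrm{Fix}(f) = \{v : f v = v\}$ with $\mu(\eta_f) > 0$, and let $\sigma$ be a primitive vector with $\mu(\sigma) = 0$. Then $m_f := \mu(\eta_f)/m_L$ satisfies $m_f \in \{1, 2\}$, and moreover $m_f = |\det A|$ where $A$ is the matrix with columns $\eta_f$ and $\sigma$. -/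

import Mathlib

/-- let `f ∈ GL(2,ℤ)` be an involution (`f² = I`, `f ≠ ±I`, hence with
eigenvalues `1` and `-1`), `μ(v) = n 0 * v 0 + n 1 * v 1` a linear functional with image
`m_L ℤ` (`m_L ≥ 1`) satisfying `μ ∘ f = μ`; let `η_f` be the primitive vector spanning
`Fix(f)` with `μ(η_f) > 0` and `σ` a primitive vector with `μ(σ) = 0`. Then
`m_f = μ(η_f)/m_L ∈ {1, 2}`, and `m_f = |det A|` where `A` has columns `η_f` and `σ`. -/
theorem stmt_14 (f : Matrix (Fin 2) (Fin 2) ℤ) (hf2 : f * f = 1) (hf1 : f ≠ 1)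
    (hfneg : f ≠ -1)
    (n : Fin 2 → ℤ) (mL : ℕ) (hmL : 1 ≤ mL)
    (himg : Int.gcd (n 0) (n 1) = mL)
    (hμf : ∀ v : Fin 2 → ℤ, n 0 * (f.mulVec v 0) + n 1 * (f.mulVec v 1)
      = n 0 * v 0 + n 1 * v 1)
    (η σ : Fin 2 → ℤ)
    (hηprim : Int.gcd (η 0) (η 1) = 1)
    (hηfix : f.mulVec η = η)
    (hηspan : ∀ v : Fin 2 → ℤ, f.mulVec v = v → ∃ t : ℤ, v = t • η)
    (hηpos : 0 < n 0 * η 0 + n 1 * η 1)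
    (hσprim : Int.gcd (σ 0) (σ 1) = 1)
    (hσ : n 0 * σ 0 + n 1 * σ 1 = 0) :
    (n 0 * η 0 + n 1 * η 1 = mL ∨ n 0 * η 0 + n 1 * η 1 = 2 * mL) ∧
      n 0 * η 0 + n 1 * η 1
        = (mL : ℤ) * ((!![η 0, σ 0; η 1, σ 1] : Matrix (Fin 2) (Fin 2) ℤ).det.natAbs) := by
  set M : ℤ := n 0 * η 0 + n 1 * η 1 with hM
  set d : ℤ := (!![η 0, σ 0; η 1, σ 1] : Matrix (Fin 2) (Fin 2) ℤ).det with hd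
  have hdval : d = η 0 * σ 1 - σ 0 * η 1 := by
    rw [hd, Matrix.det_fin_two_of]
  -- key identities
  have h0 : M * σ 0 = (-n 1) * d := by rw [hdval]; linear_combination (η 0) * hσ
  have h1 : M * σ 1 = n 0 * d := by rw [hdval]; linear_combination (η 1) * hσ
  -- second part: M = mL * |d|
  have hgcd : M.natAbs * Int.gcd (σ 0) (σ 1) = d.natAbs * Int.gcd (n 0) (n 1) := by
    have := Int.gcd_mul_left M (σ 0) (σ 1)
    rw [h0, h1] at this
    rw [← this, Int.gcd_mul_right, Int.neg_gcd, Int.gcd_comm (n 1) (n 0)]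
    ring
  rw [hσprim, himg, mul_one] at hgcd
  have hMeq : M = (mL : ℤ) * d.natAbs := by
    have : (M.natAbs : ℤ) = (d.natAbs : ℤ) * mL := by exact_mod_cast congrArg (Nat.cast : ℕ → ℤ) hgcd
    rw [Int.natAbs_of_nonneg hηpos.le] at this
    linarith
  refine ⟨?_, hMeq⟩
  -- first part
  have hmL0 : (mL : ℤ) ∣ n 0 := by rw [← himg]; exact Int.gcd_dvd_left _ _
  have hmL1 : (mL : ℤ) ∣ n 1 := by rw [← himg]; exact Int.gcd_dvd_right _ _
  have hmLM : (mL : ℤ) ∣ M := dvd_add (hmL0.mul_right _) (hmL1.mul_right _)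
  -- Bezout vector v with μ(v) = mL
  set v : Fin 2 → ℤ := ![Int.gcdA (n 0) (n 1), Int.gcdB (n 0) (n 1)] with hv
  have hμv : n 0 * v 0 + n 1 * v 1 = (mL : ℤ) := by
    rw [hv]
    simp only [Matrix.cons_val_zero, Matrix.cons_val_one, Matrix.head_cons]
    rw [← Int.gcd_eq_gcd_ab, himg]
  -- w := f v + v is fixed by f
  set w : Fin 2 → ℤ := f.mulVec v + v with hw
  have hwfix : f.mulVec w = w := by
    rw [hw, Matrix.mulVec_add, Matrix.mulVec_mulVec, hf2, Matrix.one_mulVec]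
    abel
  obtain ⟨t, ht⟩ := hηspan w hwfix
  have hμw : n 0 * w 0 + n 1 * w 1 = 2 * mL := by
    have := hμf v
    simp only [hw, Pi.add_apply]
    push_cast
    linarith [hμv]
  have h2mL : t * M = 2 * (mL : ℤ) := by
    rw [← hμw, ht]
    simp only [Pi.smul_apply, smul_eq_mul]
    ring
  have hMdvd : M ∣ 2 * (mL : ℤ) := ⟨t, by linarith [h2mL]⟩
  obtain ⟨k, hk⟩ := hmLM
  have hmLpos : (0 : ℤ) < mL := by exact_mod_cast hmL
  have hkpos : 0 < k := by
    by_contra h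
    push_neg at h
    nlinarith [hηpos]
  have hkd2 : k ∣ 2 := by
    have : (mL : ℤ) * k ∣ (mL : ℤ) * 2 := by rw [← hk]; rwa [mul_comm 2 (mL:ℤ)] at hMdvd
    exact (mul_dvd_mul_iff_left hmLpos.ne').mp this
  have hkle : k ≤ 2 := Int.le_of_dvd (by norm_num) hkd2
  have hk2 : k = 1 ∨ k = 2 := by
    interval_cases k
    · omega
    · omega
  rcases hk2 with h | h
  · left; rw [hk, h, mul_one]
  · right; rw [hk, h]; ring
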